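/- Let Z be a real s×s matrix, set S_t := exp(tZ), and let ψ₀ be the Lévy symbol associated to α ∈ ℝ^s, a real symmetric positive semidefinite s×s matrix A, and a Lévy measure ν on ℝ^s. Suppose for each t ≥ 0 that Q_t is a probability measure on ℝ^s with charFun(Q_t)(k) = exp( ∫₀ᵗ ψ₀(S_τ k) dτ ) for all k, and define the transition probability P_t(·|x), for x ∈ ℝ^s, as the pushforward of Q_t under the translation y ↦ y + S_tᵀ x. Then the Chapman–Kolmogorov identity holds: for all t, r ≥ 0, all x ∈ ℝ^s, and every Borel set C ⊆ ℝ^s, ∫_{ℝ^s} P_t(C|y) P_r(dy|x) = P_{t+r}(C|x). -/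

import Mathlib

open MeasureTheory Matrix Filter ComplexOrder

/-- The matrix semigroup `S_t = exp (t Z)` generated by a real `d × d` matrix `Z`. -/
noncomputable def expm {d : ℕ} (Z : Matrix (Fin d) (Fin d) ℝ) (t : ℝ) :
    Matrix (Fin d) (Fin d) ℝ :=
  NormedSpace.exp (t • Z)

/-- The Euclidean norm on `ℝ^d`. -/
noncomputable def eucNorm {d : ℕ} (x : Fin d → ℝ) : ℝ :=
  Real.sqrt (∑ i, x i ^ 2)

/-- The characteristic function of a measure on `ℝ^d`. -/
noncomputable def charFun {d : ℕ} (μ : Measure (Fin d → ℝ)) (ξ : Fin d → ℝ) : ℂ :=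
  ∫ x, Complex.exp (Complex.I * ((x ⬝ᵥ ξ : ℝ) : ℂ)) ∂μ

/-- Convolution of two measures on `ℝ^d`. -/
noncomputable def mconv {d : ℕ} (μ ρ : Measure (Fin d → ℝ)) : Measure (Fin d → ℝ) :=
  (μ.prod ρ).map fun p => p.1 + p.2

/-- The `m`-fold convolution power of a measure on `ℝ^d`. -/
noncomputable def convPow {d : ℕ} (ρ : Measure (Fin d → ℝ)) : ℕ → Measure (Fin d → ℝ)
  | 0 => Measure.dirac 0
  | n + 1 => mconv ρ (convPow ρ n)

/-- A probability measure on `ℝ^d` is infinitely divisible if for every `m ≥ 1` it is an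
`m`-fold convolution power of some probability measure. -/
def InfinitelyDivisible {d : ℕ} (μ : Measure (Fin d → ℝ)) : Prop :=
  ∀ m : ℕ, 1 ≤ m → ∃ ρ : Measure (Fin d → ℝ), IsProbabilityMeasure ρ ∧ convPow ρ m = μ

/-- `g : ℝ^d → ℂ` is twisted positive definite with respect to the antisymmetric form `Δ`. -/
def TwistedPosDef {d : ℕ} (Δ : Matrix (Fin d) (Fin d) ℝ) (g : (Fin d → ℝ) → ℂ) : Prop :=
  ∀ (N : ℕ) (ξ : Fin N → (Fin d → ℝ)) (c : Fin N → ℂ),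
    0 ≤ ∑ k : Fin N, ∑ l : Fin N, (starRingEnd ℂ) (c k) * g (ξ l - ξ k) *
      Complex.exp (Complex.I / 2 * (((ξ k) ⬝ᵥ (Δ.mulVec (ξ l)) : ℝ) : ℂ)) * c l

/-- A Lévy measure on `ℝ^d`. -/
def IsLevyMeasure {d : ℕ} (ν : Measure (Fin d → ℝ)) : Prop :=
  ν {0} = 0 ∧
  (∫⁻ η in {η : Fin d → ℝ | eucNorm η < 1}, ENNReal.ofReal (eucNorm η ^ 2) ∂ν) < ⊤ ∧
  ν {η : Fin d → ℝ | 1 ≤ eucNorm η} < ⊤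

/-- The Lévy symbol associated to a generating triplet `(A, ν, α)`. -/
noncomputable def levySymbol {d : ℕ} (α : Fin d → ℝ) (A : Matrix (Fin d) (Fin d) ℝ)
    (ν : Measure (Fin d → ℝ)) (ξ : Fin d → ℝ) : ℂ :=
  Complex.I * ((α ⬝ᵥ ξ : ℝ) : ℂ) - (1 / 2 : ℂ) * ((ξ ⬝ᵥ (A.mulVec ξ) : ℝ) : ℂ) +
    ∫ η, (Complex.exp (Complex.I * ((η ⬝ᵥ ξ : ℝ) : ℂ)) - 1 -
      Complex.I * ((({η : Fin d → ℝ | eucNorm η < 1}).indicator (fun η' => η' ⬝ᵥ ξ) η : ℝ) : ℂ)) ∂ν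

/-- `Ψ` admits the Lévy–Khinchine representation with generating triplet `(A, ν, α)`. -/
def HasTriplet {d : ℕ} (Ψ : (Fin d → ℝ) → ℂ) (A : Matrix (Fin d) (Fin d) ℝ)
    (ν : Measure (Fin d → ℝ)) (α : Fin d → ℝ) : Prop :=
  A.IsSymm ∧ A.PosSemidef ∧ ν {0} = 0 ∧
  (∫⁻ η, ENNReal.ofReal (min (eucNorm η ^ 2) 1) ∂ν) < ⊤ ∧
  ∀ ξ, Ψ ξ = levySymbol α A ν ξ


section ChapmanKolmogorovHelpers

namespace CK

open scoped ENNReal NNReal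



variable {d : ℕ}

lemma continuous_dot_right (k : Fin d → ℝ) : Continuous fun x : Fin d → ℝ => x ⬝ᵥ k := by
  simp only [dotProduct]
  exact continuous_finset_sum _ fun i _ => (continuous_apply i).mul continuous_const

lemma continuous_dot_left (k : Fin d → ℝ) : Continuous fun x : Fin d → ℝ => k ⬝ᵥ x := by
  simp only [dotProduct]
  exact continuous_finset_sum _ fun i _ => continuous_const.mul (continuous_apply i)

lemma norm_cexp_I_mul (r : ℝ) : ‖Complex.exp (Complex.I * (r : ℂ))‖ = 1 := by
  rw [Complex.norm_exp]
  simp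

lemma norm_cexp_mul_I (r : ℝ) : ‖Complex.exp ((r : ℂ) * Complex.I)‖ = 1 := by
  rw [mul_comm]; exact norm_cexp_I_mul r

lemma eucNorm_eq_norm (x : Fin d → ℝ) :
    eucNorm x = ‖(WithLp.equiv 2 (Fin d → ℝ)).symm x‖ := by
  rw [EuclideanSpace.norm_eq]
  unfold eucNorm
  congr 1
  refine Finset.sum_congr rfl fun i _ => ?_
  rw [Real.norm_eq_abs, sq_abs]
  rfl

lemma eucNorm_nonneg (x : Fin d → ℝ) : 0 ≤ eucNorm x := Real.sqrt_nonneg _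

lemma continuous_eucNorm : Continuous fun x : Fin d → ℝ => eucNorm x := by
  unfold eucNorm
  exact Real.continuous_sqrt.comp (continuous_finset_sum _ fun i _ => (continuous_apply i).pow 2)

lemma abs_dot_le (x y : Fin d → ℝ) : |x ⬝ᵥ y| ≤ eucNorm x * eucNorm y := by
  rw [eucNorm_eq_norm, eucNorm_eq_norm]
  have h := abs_real_inner_le_norm ((WithLp.equiv 2 (Fin d → ℝ)).symm x)
    ((WithLp.equiv 2 (Fin d → ℝ)).symm y)
  have h2 : (inner ℝ ((WithLp.equiv 2 (Fin d → ℝ)).symm x) ((WithLp.equiv 2 (Fin d → ℝ)).symm y) : ℝ)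
      = x ⬝ᵥ y := by
    rw [PiLp.inner_apply]
    simp [dotProduct, mul_comm]
  rwa [h2] at h

lemma measurableSet_small : MeasurableSet {η : Fin d → ℝ | eucNorm η < 1} :=
  measurableSet_lt continuous_eucNorm.measurable measurable_const

lemma min_sq_integrable {ν : MeasureTheory.Measure (Fin d → ℝ)} (hν : IsLevyMeasure ν) :
    MeasureTheory.Integrable (fun η : Fin d → ℝ => min (eucNorm η ^ 2) 1) ν := by
  have hcont : Continuous fun η : Fin d → ℝ => min (eucNorm η ^ 2) 1 :=
    (continuous_eucNorm.pow 2).min continuous_const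
  refine ⟨hcont.aestronglyMeasurable, ?_⟩
  rw [MeasureTheory.hasFiniteIntegral_iff_ofReal
    (MeasureTheory.ae_of_all _ fun η => le_min (sq_nonneg _) zero_le_one)]
  rw [← MeasureTheory.lintegral_add_compl
    (fun η => ENNReal.ofReal (min (eucNorm η ^ 2) 1)) measurableSet_small]
  have h1 : (∫⁻ η in {η : Fin d → ℝ | eucNorm η < 1}, ENNReal.ofReal (min (eucNorm η ^ 2) 1) ∂ν)
      ≤ ∫⁻ η in {η : Fin d → ℝ | eucNorm η < 1}, ENNReal.ofReal (eucNorm η ^ 2) ∂ν :=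
    MeasureTheory.lintegral_mono fun η => ENNReal.ofReal_le_ofReal (min_le_left _ _)
  have h2 : (∫⁻ η in {η : Fin d → ℝ | eucNorm η < 1}ᶜ, ENNReal.ofReal (min (eucNorm η ^ 2) 1) ∂ν)
      ≤ ∫⁻ _ in {η : Fin d → ℝ | eucNorm η < 1}ᶜ, 1 ∂ν :=
    MeasureTheory.lintegral_mono fun η => by
      simpa using ENNReal.ofReal_le_one.mpr (min_le_right _ _)
  have h3 : ({η : Fin d → ℝ | eucNorm η < 1}ᶜ : Set _) = {η : Fin d → ℝ | 1 ≤ eucNorm η} := by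
    ext η; simp [not_lt]
  refine ENNReal.add_lt_top.mpr ⟨lt_of_le_of_lt h1 hν.2.1, lt_of_le_of_lt h2 ?_⟩
  rw [MeasureTheory.setLIntegral_one, h3]
  exact hν.2.2

lemma levy_bound (ξ η : Fin d → ℝ) :
    ‖Complex.exp (Complex.I * ((η ⬝ᵥ ξ : ℝ) : ℂ)) - 1 -
      Complex.I * ((({η' : Fin d → ℝ | eucNorm η' < 1}).indicator (fun η' => η' ⬝ᵥ ξ) η : ℝ) : ℂ)‖
      ≤ 3 * (eucNorm ξ ^ 2 + 1) * min (eucNorm η ^ 2) 1 := by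
  have hξ := eucNorm_nonneg ξ
  have hη := eucNorm_nonneg η
  have hdot := abs_dot_le η ξ
  by_cases hmem : η ∈ {η' : Fin d → ℝ | eucNorm η' < 1}
  · have hη1 : eucNorm η < 1 := hmem
    rw [Set.indicator_of_mem hmem]
    have hmin : min (eucNorm η ^ 2) 1 = eucNorm η ^ 2 := min_eq_left (by nlinarith)
    rw [hmin]
    set a : ℝ := η ⬝ᵥ ξ with ha
    have habs : ‖Complex.I * (a : ℂ)‖ = |a| := by
      rw [norm_mul, Complex.norm_I, Complex.norm_real, Real.norm_eq_abs, one_mul]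
    have hsq : a ^ 2 ≤ (eucNorm η * eucNorm ξ) ^ 2 := by
      nlinarith [abs_nonneg a, neg_abs_le a, le_abs_self a]
    by_cases hA : |a| ≤ 1
    · have h := Complex.norm_exp_sub_one_sub_id_le (x := Complex.I * (a : ℂ)) (by rw [habs]; exact hA)
      calc ‖Complex.exp (Complex.I * (a : ℂ)) - 1 - Complex.I * (a : ℂ)‖
          ≤ ‖Complex.I * (a : ℂ)‖ ^ 2 := h
        _ = a ^ 2 := by rw [habs, _root_.sq_abs]
        _ ≤ (eucNorm η * eucNorm ξ) ^ 2 := hsq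
        _ ≤ 3 * (eucNorm ξ ^ 2 + 1) * eucNorm η ^ 2 := by nlinarith
    · push_neg at hA
      have h1 : ‖Complex.exp (Complex.I * (a : ℂ)) - 1 - Complex.I * (a : ℂ)‖
          ≤ ‖Complex.exp (Complex.I * (a : ℂ)) - 1‖ + ‖Complex.I * (a : ℂ)‖ := norm_sub_le _ _
      have h2 : ‖Complex.exp (Complex.I * (a : ℂ)) - 1‖ ≤ 2 := by
        calc ‖Complex.exp (Complex.I * (a : ℂ)) - 1‖
            ≤ ‖Complex.exp (Complex.I * (a : ℂ))‖ + ‖(1 : ℂ)‖ := norm_sub_le _ _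
          _ = 2 := by rw [norm_cexp_I_mul]; norm_num
      have h3 : ‖Complex.I * (a : ℂ)‖ = |a| := by rw [habs]
      have h5 : |a| ≤ a ^ 2 := by nlinarith [abs_nonneg a, sq_abs a]
      calc ‖Complex.exp (Complex.I * (a : ℂ)) - 1 - Complex.I * (a : ℂ)‖
          ≤ 2 + |a| := by rw [h3] at h1; linarith
        _ ≤ 3 * a ^ 2 := by nlinarith
        _ ≤ 3 * (eucNorm ξ ^ 2 + 1) * eucNorm η ^ 2 := by nlinarith
  · rw [Set.indicator_of_notMem hmem]
    have hη1 : 1 ≤ eucNorm η := not_lt.mp hmem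
    have hmin : min (eucNorm η ^ 2) 1 = 1 := min_eq_right (by nlinarith)
    rw [hmin]
    simp only [Complex.ofReal_zero, mul_zero, sub_zero]
    calc ‖Complex.exp (Complex.I * ((η ⬝ᵥ ξ : ℝ) : ℂ)) - 1‖
        ≤ ‖Complex.exp (Complex.I * ((η ⬝ᵥ ξ : ℝ) : ℂ))‖ + ‖(1 : ℂ)‖ := norm_sub_le _ _
      _ = 2 := by rw [norm_cexp_I_mul]; norm_num
      _ ≤ 3 * (eucNorm ξ ^ 2 + 1) * 1 := by nlinarith

lemma levy_integrand_meas (ν : MeasureTheory.Measure (Fin d → ℝ)) (ξ : Fin d → ℝ) :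
    MeasureTheory.AEStronglyMeasurable (fun η : Fin d → ℝ =>
      Complex.exp (Complex.I * ((η ⬝ᵥ ξ : ℝ) : ℂ)) - 1 -
      Complex.I * ((({η' : Fin d → ℝ | eucNorm η' < 1}).indicator (fun η' => η' ⬝ᵥ ξ) η : ℝ) : ℂ)) ν := by
  apply Measurable.aestronglyMeasurable
  refine Measurable.sub (Measurable.sub ?_ measurable_const) ?_
  · exact Complex.measurable_exp.comp
      (measurable_const.mul (Complex.measurable_ofReal.comp (continuous_dot_right ξ).measurable))
  · exact measurable_const.mul
      (Complex.measurable_ofReal.comp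
        ((continuous_dot_right ξ).measurable.indicator measurableSet_small))

lemma levy_integrand_integrable {ν : MeasureTheory.Measure (Fin d → ℝ)} (hν : IsLevyMeasure ν)
    (ξ : Fin d → ℝ) :
    MeasureTheory.Integrable (fun η : Fin d → ℝ =>
      Complex.exp (Complex.I * ((η ⬝ᵥ ξ : ℝ) : ℂ)) - 1 -
      Complex.I * ((({η' : Fin d → ℝ | eucNorm η' < 1}).indicator (fun η' => η' ⬝ᵥ ξ) η : ℝ) : ℂ)) ν :=
  ((min_sq_integrable hν).const_mul (3 * (eucNorm ξ ^ 2 + 1))).mono'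
    (levy_integrand_meas ν ξ)
    (MeasureTheory.ae_of_all _ fun η => by simpa [mul_assoc] using levy_bound ξ η)

lemma continuous_levySymbol (α : Fin d → ℝ) (A : Matrix (Fin d) (Fin d) ℝ)
    {ν : MeasureTheory.Measure (Fin d → ℝ)} (hν : IsLevyMeasure ν) :
    Continuous (levySymbol α A ν) := by
  unfold levySymbol
  refine Continuous.add (Continuous.sub ?_ ?_) ?_
  · exact continuous_const.mul (Complex.continuous_ofReal.comp (continuous_dot_left α))
  · exact continuous_const.mul (Complex.continuous_ofReal.comp
      (continuous_id.dotProduct (continuous_const.matrix_mulVec continuous_id)))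
  · rw [continuous_iff_continuousAt]
    intro ξ₀
    have hnb : {ξ : Fin d → ℝ | eucNorm ξ < eucNorm ξ₀ + 1} ∈ nhds ξ₀ :=
      (isOpen_lt continuous_eucNorm continuous_const).mem_nhds (by
        show eucNorm ξ₀ < eucNorm ξ₀ + 1
        linarith)
    refine MeasureTheory.continuousAt_of_dominated
      (Filter.Eventually.of_forall fun ξ => levy_integrand_meas ν ξ) ?_
      ((min_sq_integrable hν).const_mul (3 * ((eucNorm ξ₀ + 1) ^ 2 + 1)))
      (MeasureTheory.ae_of_all _ fun η => ?_)
    · filter_upwards [hnb] with ξ hξ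
      refine MeasureTheory.ae_of_all _ fun η => (levy_bound ξ η).trans ?_
      have h1 : 0 ≤ min (eucNorm η ^ 2) 1 := le_min (sq_nonneg _) zero_le_one
      have h2 : eucNorm ξ ≤ eucNorm ξ₀ + 1 := le_of_lt hξ
      have h3 := eucNorm_nonneg ξ
      have h4 := eucNorm_nonneg ξ₀
      have h5 : 3 * (eucNorm ξ ^ 2 + 1) ≤ 3 * ((eucNorm ξ₀ + 1) ^ 2 + 1) := by nlinarith
      exact mul_le_mul_of_nonneg_right h5 h1
    · refine ContinuousAt.sub (ContinuousAt.sub ?_ continuousAt_const) ?_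
      · exact (Complex.continuous_exp.comp (continuous_const.mul
          (Complex.continuous_ofReal.comp (continuous_dot_left η)))).continuousAt
      · have hrw : (fun ξ : Fin d → ℝ => Complex.I *
            ((({η' : Fin d → ℝ | eucNorm η' < 1}).indicator (fun η' => η' ⬝ᵥ ξ) η : ℝ) : ℂ))
            = fun ξ : Fin d → ℝ => if η ∈ {η' : Fin d → ℝ | eucNorm η' < 1} then
                Complex.I * ((η ⬝ᵥ ξ : ℝ) : ℂ) else 0 := by
          funext ξ
          rw [Set.indicator_apply]
          split_ifs <;> simp
        rw [hrw]
        split_ifs with hmem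
        · exact (continuous_const.mul
            (Complex.continuous_ofReal.comp (continuous_dot_left η))).continuousAt
        · exact continuousAt_const

lemma continuous_expm {n : ℕ} (Z : Matrix (Fin n) (Fin n) ℝ) :
    Continuous fun t : ℝ => expm Z t := by
  letI : SeminormedRing (Matrix (Fin n) (Fin n) ℝ) := Matrix.linftyOpSemiNormedRing
  letI : NormedRing (Matrix (Fin n) (Fin n) ℝ) := Matrix.linftyOpNormedRing
  letI : NormedAlgebra ℝ (Matrix (Fin n) (Fin n) ℝ) := Matrix.linftyOpNormedAlgebra
  letI : NormedAlgebra ℚ (Matrix (Fin n) (Fin n) ℝ) := NormedAlgebra.restrictScalars ℚ ℝ _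
  exact (NormedSpace.exp_continuous (𝔸 := Matrix (Fin n) (Fin n) ℝ)).comp (continuous_id.smul continuous_const)

lemma expm_add {n : ℕ} (Z : Matrix (Fin n) (Fin n) ℝ) (t r : ℝ) :
    expm Z (t + r) = expm Z t * expm Z r := by
  unfold expm
  rw [add_smul]
  exact Matrix.exp_add_of_commute _ _ (((Commute.refl Z).smul_left t).smul_right r)

lemma measurable_mulVec (M : Matrix (Fin d) (Fin d) ℝ) :
    Measurable fun y : Fin d → ℝ => M *ᵥ y := by
  have : Continuous fun y : Fin d → ℝ => M *ᵥ y := by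
    exact continuous_const.matrix_mulVec continuous_id
  exact this.measurable

lemma charFun_map_mulVec (μ : MeasureTheory.Measure (Fin d → ℝ)) (M : Matrix (Fin d) (Fin d) ℝ)
    (k : Fin d → ℝ) :
    charFun (μ.map fun y => Mᵀ *ᵥ y) k = charFun μ (M *ᵥ k) := by
  unfold _root_.charFun
  have hsm : MeasureTheory.AEStronglyMeasurable
      (fun x : Fin d → ℝ => Complex.exp (Complex.I * ((x ⬝ᵥ k : ℝ) : ℂ)))
      (μ.map fun y => Mᵀ *ᵥ y) := by
    apply Continuous.aestronglyMeasurable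
    exact Complex.continuous_exp.comp (continuous_const.mul
      (Complex.continuous_ofReal.comp (continuous_dot_right k)))
  rw [MeasureTheory.integral_map (measurable_mulVec Mᵀ).aemeasurable hsm]
  have hdd : ∀ y : Fin d → ℝ, (Mᵀ *ᵥ y) ⬝ᵥ k = y ⬝ᵥ (M *ᵥ k) := fun y => by
    rw [Matrix.mulVec_transpose, dotProduct_mulVec]
  simp_rw [hdd]

lemma charFun_mconv (μ ρ : MeasureTheory.Measure (Fin d → ℝ)) [MeasureTheory.IsProbabilityMeasure μ]
    [MeasureTheory.IsProbabilityMeasure ρ] (k : Fin d → ℝ) :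
    charFun (mconv μ ρ) k = charFun μ k * charFun ρ k := by
  unfold _root_.charFun mconv
  have hc1 : Continuous fun p : (Fin d → ℝ) × (Fin d → ℝ) =>
      Complex.exp (Complex.I * ((p.1 ⬝ᵥ k : ℝ) : ℂ)) :=
    Complex.continuous_exp.comp (continuous_const.mul
      (Complex.continuous_ofReal.comp ((continuous_dot_right k).comp continuous_fst)))
  have hc2 : Continuous fun p : (Fin d → ℝ) × (Fin d → ℝ) =>
      Complex.exp (Complex.I * ((p.2 ⬝ᵥ k : ℝ) : ℂ)) :=
    Complex.continuous_exp.comp (continuous_const.mul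
      (Complex.continuous_ofReal.comp ((continuous_dot_right k).comp continuous_snd)))
  have hsm : MeasureTheory.AEStronglyMeasurable
      (fun x : Fin d → ℝ => Complex.exp (Complex.I * ((x ⬝ᵥ k : ℝ) : ℂ)))
      ((μ.prod ρ).map fun p => p.1 + p.2) := by
    apply Continuous.aestronglyMeasurable
    exact Complex.continuous_exp.comp (continuous_const.mul
      (Complex.continuous_ofReal.comp (continuous_dot_right k)))
  rw [MeasureTheory.integral_map (show Measurable fun p : (Fin d → ℝ) × (Fin d → ℝ) => p.1 + p.2
    from measurable_fst.add measurable_snd).aemeasurable hsm]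
  have heq : ∀ p : (Fin d → ℝ) × (Fin d → ℝ),
      Complex.exp (Complex.I * (((p.1 + p.2) ⬝ᵥ k : ℝ) : ℂ))
        = Complex.exp (Complex.I * ((p.1 ⬝ᵥ k : ℝ) : ℂ)) *
            Complex.exp (Complex.I * ((p.2 ⬝ᵥ k : ℝ) : ℂ)) := by
    intro p
    rw [← Complex.exp_add, add_dotProduct, Complex.ofReal_add, mul_add]
  simp_rw [heq]
  have hint : MeasureTheory.Integrable (fun p : (Fin d → ℝ) × (Fin d → ℝ) =>
      Complex.exp (Complex.I * ((p.1 ⬝ᵥ k : ℝ) : ℂ)) *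
        Complex.exp (Complex.I * ((p.2 ⬝ᵥ k : ℝ) : ℂ))) (μ.prod ρ) := by
    refine (MeasureTheory.integrable_const (1 : ℝ)).mono' (hc1.mul hc2).aestronglyMeasurable
      (MeasureTheory.ae_of_all _ fun p => ?_)
    rw [norm_mul, norm_cexp_I_mul, norm_cexp_I_mul]
    norm_num
  rw [MeasureTheory.integral_prod _ hint]
  simp_rw [MeasureTheory.integral_const_mul]
  rw [MeasureTheory.integral_mul_const]

lemma mconv_apply {μ ρ : MeasureTheory.Measure (Fin d → ℝ)} [MeasureTheory.SFinite μ]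
    [MeasureTheory.SFinite ρ] {B : Set (Fin d → ℝ)} (hB : MeasurableSet B) :
    mconv μ ρ B = ∫⁻ w, μ {z | z + w ∈ B} ∂ρ := by
  unfold mconv
  have hm : Measurable fun p : (Fin d → ℝ) × (Fin d → ℝ) => p.1 + p.2 :=
    measurable_fst.add measurable_snd
  rw [MeasureTheory.Measure.map_apply hm hB,
    MeasureTheory.Measure.prod_apply_symm (hm hB)]
  rfl


open MeasureTheory in
lemma ext_of_cexp_inner {μ ν : Measure (EuclideanSpace ℝ (Fin d))}
    [IsProbabilityMeasure μ] [IsProbabilityMeasure ν]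
    (h : ∀ ξ : EuclideanSpace ℝ (Fin d),
      (∫ x, Complex.exp (Complex.I * ((inner ℝ x ξ : ℝ) : ℂ)) ∂μ)
        = ∫ x, Complex.exp (Complex.I * ((inner ℝ x ξ : ℝ) : ℂ)) ∂ν) : μ = ν := by
  apply Measure.ext_of_charFun
  funext ξ
  simp only [MeasureTheory.charFun_apply]
  simp_rw [mul_comm _ Complex.I]
  exact h ξ

open MeasureTheory in
lemma ext_of_charFun {μ ν : Measure (Fin d → ℝ)} [IsProbabilityMeasure μ]
    [IsProbabilityMeasure ν] (h : ∀ k, charFun μ k = charFun ν k) : μ = ν := by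
  haveI h1 : IsProbabilityMeasure (μ.map (MeasurableEquiv.toLp 2 (Fin d → ℝ))) :=
    Measure.isProbabilityMeasure_map (MeasurableEquiv.measurable _).aemeasurable
  haveI h2 : IsProbabilityMeasure (ν.map (MeasurableEquiv.toLp 2 (Fin d → ℝ))) :=
    Measure.isProbabilityMeasure_map (MeasurableEquiv.measurable _).aemeasurable
  have key : μ.map (MeasurableEquiv.toLp 2 (Fin d → ℝ))
      = ν.map (MeasurableEquiv.toLp 2 (Fin d → ℝ)) := by
    apply ext_of_cexp_inner
    intro ξ
    rw [integral_map_equiv, integral_map_equiv]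
    have hx : ∀ x : Fin d → ℝ,
        ((inner ℝ ((MeasurableEquiv.toLp 2 (Fin d → ℝ)) x) ξ : ℝ))
          = x ⬝ᵥ (fun i => ξ i) := by
      intro x
      rw [PiLp.inner_apply]
      simp [dotProduct, mul_comm]
    simp_rw [hx]
    exact h _
  calc μ = (μ.map (MeasurableEquiv.toLp 2 (Fin d → ℝ))).map
        (MeasurableEquiv.toLp 2 (Fin d → ℝ)).symm := (MeasurableEquiv.map_symm_map _).symm
    _ = (ν.map (MeasurableEquiv.toLp 2 (Fin d → ℝ))).map
        (MeasurableEquiv.toLp 2 (Fin d → ℝ)).symm := by rw [key]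
    _ = ν := MeasurableEquiv.map_symm_map _


open MeasureTheory in
lemma Q_add_eq {n : ℕ} (Z : Matrix (Fin n) (Fin n) ℝ) (α : Fin n → ℝ)
    (A : Matrix (Fin n) (Fin n) ℝ) {ν : Measure (Fin n → ℝ)} (hν : IsLevyMeasure ν)
    (Q : ℝ → Measure (Fin n → ℝ))
    (hQprob : ∀ t : ℝ, 0 ≤ t → IsProbabilityMeasure (Q t))
    (hQchar : ∀ t : ℝ, 0 ≤ t → ∀ k : Fin n → ℝ, charFun (Q t) k =
      Complex.exp (∫ τ in (0:ℝ)..t, levySymbol α A ν ((expm Z τ).mulVec k)))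
    {t r : ℝ} (ht : 0 ≤ t) (hr : 0 ≤ r) :
    Q (t + r) = mconv (Q t) ((Q r).map fun y => (expm Z t)ᵀ *ᵥ y) := by
  haveI := hQprob t ht
  haveI := hQprob r hr
  haveI := hQprob (t + r) (by linarith)
  haveI hmapP : IsProbabilityMeasure ((Q r).map fun y => (expm Z t)ᵀ *ᵥ y) :=
    Measure.isProbabilityMeasure_map (measurable_mulVec (expm Z t)ᵀ).aemeasurable
  haveI : IsProbabilityMeasure (mconv (Q t) ((Q r).map fun y => (expm Z t)ᵀ *ᵥ y)) := by
    unfold mconv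
    exact Measure.isProbabilityMeasure_map (measurable_fst.add measurable_snd).aemeasurable
  apply ext_of_charFun
  intro k
  rw [charFun_mconv, charFun_map_mulVec, hQchar t ht, hQchar r hr, hQchar (t + r) (by linarith),
    ← Complex.exp_add]
  congr 1
  have hcomp : ∀ τ : ℝ, (expm Z τ) *ᵥ ((expm Z t) *ᵥ k) = expm Z (τ + t) *ᵥ k := by
    intro τ
    rw [Matrix.mulVec_mulVec, ← expm_add]
  simp_rw [hcomp]
  have hcont : Continuous fun τ : ℝ => levySymbol α A ν (expm Z τ *ᵥ k) :=
    (continuous_levySymbol α A hν).comp ((continuous_expm Z).matrix_mulVec continuous_const)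
  have h2 : (∫ τ in (0:ℝ)..r, levySymbol α A ν (expm Z (τ + t) *ᵥ k))
      = ∫ τ in t..(r + t), levySymbol α A ν (expm Z τ *ᵥ k) := by
    have := intervalIntegral.integral_comp_add_right (a := (0:ℝ)) (b := r)
      (fun τ => levySymbol α A ν (expm Z τ *ᵥ k)) t
    simpa using this
  rw [h2, show r + t = t + r from add_comm r t]
  exact (intervalIntegral.integral_add_adjacent_intervals
    (hcont.intervalIntegrable 0 t) (hcont.intervalIntegrable t (t + r))).symm

end CK



end ChapmanKolmogorovHelpers

/-- Chapman–Kolmogorov identity for the transition probabilities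
`P_t(·|x) = (translation by S_tᵀ x)_* Q_t` of the Ornstein–Uhlenbeck type semigroup. -/
theorem stmt18 (s : ℕ) (hs : 0 < s) (Z : Matrix (Fin s) (Fin s) ℝ)
    (α : Fin s → ℝ) (A : Matrix (Fin s) (Fin s) ℝ) (hA : A.IsSymm) (hApsd : A.PosSemidef)
    (ν : Measure (Fin s → ℝ)) (hν : IsLevyMeasure ν)
    (Q : ℝ → Measure (Fin s → ℝ))
    (hQprob : ∀ t : ℝ, 0 ≤ t → IsProbabilityMeasure (Q t))
    (hQchar : ∀ t : ℝ, 0 ≤ t → ∀ k : Fin s → ℝ, charFun (Q t) k =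
      Complex.exp (∫ τ in (0:ℝ)..t, levySymbol α A ν ((expm Z τ).mulVec k)))
    (P : ℝ → (Fin s → ℝ) → Measure (Fin s → ℝ))
    (hP : ∀ (t : ℝ) (x : Fin s → ℝ),
      P t x = (Q t).map (fun y => y + (expm Z t)ᵀ.mulVec x)) :
    ∀ t r : ℝ, 0 ≤ t → 0 ≤ r → ∀ x : Fin s → ℝ,
      ∀ C : Set (Fin s → ℝ), MeasurableSet C →
        ∫⁻ y, P t y C ∂(P r x) = P (t + r) x C := by
  intro t r ht hr x C hC
  haveI := hQprob t ht
  haveI := hQprob r hr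
  haveI := hQprob (t + r) (by linarith)
  have hMmeas : Measurable fun y : Fin s → ℝ => (expm Z t)ᵀ *ᵥ y := CK.measurable_mulVec _
  have hadd : ∀ c : Fin s → ℝ, Measurable fun y : Fin s → ℝ => y + c := fun c => by
    exact measurable_id.add_const c
  set F : (Fin s → ℝ) → ENNReal := fun c => Q t ((fun z => z + c) ⁻¹' C) with hF
  have hFmeas : Measurable F := by
    have : Measurable fun c : Fin s → ℝ => Q t ((fun z => (z, c)) ⁻¹'
        ((fun p : (Fin s → ℝ) × (Fin s → ℝ) => p.1 + p.2) ⁻¹' C)) :=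
      measurable_measure_prodMk_right ((measurable_fst.add measurable_snd) hC)
    exact this
  have hPtC : ∀ y, P t y C = F ((expm Z t)ᵀ *ᵥ y) := by
    intro y
    rw [hP t y, Measure.map_apply (hadd _) hC]
  have hkey : ∀ w : Fin s → ℝ, (expm Z t)ᵀ *ᵥ (w + (expm Z r)ᵀ *ᵥ x)
      = (expm Z t)ᵀ *ᵥ w + (expm Z (t + r))ᵀ *ᵥ x := by
    intro w
    rw [Matrix.mulVec_add, Matrix.mulVec_mulVec, ← Matrix.transpose_mul, ← CK.expm_add,
      add_comm r t]
  have hLHS : (∫⁻ y, P t y C ∂(P r x))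
      = ∫⁻ w, F ((expm Z t)ᵀ *ᵥ w + (expm Z (t + r))ᵀ *ᵥ x) ∂(Q r) := by
    simp_rw [hPtC]
    have hFM : Measurable fun y : Fin s → ℝ => F ((expm Z t)ᵀ *ᵥ y) := hFmeas.comp hMmeas
    rw [hP r x, lintegral_map hFM (hadd _)]
    refine lintegral_congr fun w => ?_
    rw [hkey w]
  have hRHS : P (t + r) x C
      = ∫⁻ w, F ((expm Z t)ᵀ *ᵥ w + (expm Z (t + r))ᵀ *ᵥ x) ∂(Q r) := by
    rw [hP (t + r) x, Measure.map_apply (hadd _) hC,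
      CK.Q_add_eq Z α A hν Q hQprob hQchar ht hr]
    haveI : IsProbabilityMeasure ((Q r).map fun y => (expm Z t)ᵀ *ᵥ y) :=
      Measure.isProbabilityMeasure_map hMmeas.aemeasurable
    rw [CK.mconv_apply ((hadd _) hC)]
    have hsec : Measurable fun w : Fin s → ℝ =>
        Q t {z | z + w ∈ (fun y => y + (expm Z (t + r))ᵀ *ᵥ x) ⁻¹' C} := by
      have : Measurable fun w : Fin s → ℝ => Q t ((fun z => (z, w)) ⁻¹'
          ((fun p : (Fin s → ℝ) × (Fin s → ℝ) => p.1 + p.2) ⁻¹'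
            ((fun y => y + (expm Z (t + r))ᵀ *ᵥ x) ⁻¹' C))) :=
        measurable_measure_prodMk_right
          ((measurable_fst.add measurable_snd) ((hadd _) hC))
      exact this
    rw [lintegral_map hsec hMmeas]
    refine lintegral_congr fun w => ?_
    congr 1
    ext z
    simp only [Set.mem_setOf_eq, Set.mem_preimage, hF]
    rw [add_assoc]
  rw [hLHS, hRHS]
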